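/- Fast-track actions are optimal in the paint shop model: if the current downstream color p equals the color of the next upstream car and some buffer lane is empty (or more generally not full), then some optimal completing action sequence begins with storing that car into such a lane followed immediately by retrieving it, and this pair of actions yields reward 1 with no other reward forgone; formally, the maximum cumulative reward over sequences beginning with the store-then-immediate-retrieve of the matching car equals the overall maximum cumulative reward. -/

import Mathlib

/-- A state of the paint shop buffer system: the remaining upstream sequence,
`L` FIFO buffer lanes (head of each list = front/rightmost car, retrieved first),
and the downstream sequence produced so far. -/
structure PSState (L W : ℕ) where
  upstream : List ℕ
  buffer : Fin L → List ℕ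
  downstream : List ℕ

namespace PS

/-- Actions: store the front upstream car into a lane, or retrieve the front car of a lane. -/
inductive Action (L : ℕ) where
  | store (lane : Fin L)
  | retrieve (lane : Fin L)
  deriving DecidableEq

variable {L W : ℕ}

/-- Validity of an action in a state. -/
def Valid (s : PSState L W) : Action L → Prop
  | Action.store a => s.upstream ≠ [] ∧ (s.buffer a).length < W
  | Action.retrieve a => s.buffer a ≠ []

/-- Transition function; invalid actions leave the state unchanged. -/
def step (s : PSState L W) : Action L → PSState L W
  | Action.store a =>
      if s.upstream ≠ [] ∧ (s.buffer a).length < W then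
        { s with upstream := s.upstream.tail,
                 buffer := Function.update s.buffer a (s.buffer a ++ s.upstream.take 1) }
      else s
  | Action.retrieve a =>
      match s.buffer a with
      | [] => s
      | c :: rest =>
          { s with buffer := Function.update s.buffer a rest,
                   downstream := s.downstream ++ [c] }

/-- Run a sequence of actions from a state. -/
def run (s : PSState L W) (acts : List (Action L)) : PSState L W :=
  acts.foldl step s

/-- A sequence of actions is feasible from a state if every action is valid when performed. -/
def Feasible (s : PSState L W) : List (Action L) → Prop
  | [] => True
  | a :: rest => Valid s a ∧ Feasible (step s a) rest

/-- A sequence of actions is complete if afterwards the upstream sequence and buffer are empty. -/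
def Complete (s : PSState L W) (acts : List (Action L)) : Prop :=
  (run s acts).upstream = [] ∧ ∀ a, (run s acts).buffer a = []

/-- Initial state for upstream sequence `c` with empty buffer and empty downstream sequence. -/
def init (L W : ℕ) (c : List ℕ) : PSState L W :=
  ⟨c, fun _ => [], []⟩

/-- Reward function: 1 for a retrieval matching the current downstream color,
0 for a retrieval causing a color change, 0 for a valid store, −10 for invalid actions. -/
def reward (s : PSState L W) : Action L → ℤ
  | Action.store a =>
      if s.upstream ≠ [] ∧ (s.buffer a).length < W then 0 else -10
  | Action.retrieve a =>
      match s.buffer a with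
      | [] => -10
      | c :: _ => if s.downstream.getLast? = some c then 1 else 0

/-- Cumulative reward of an action sequence. -/
def cumReward (s : PSState L W) : List (Action L) → ℤ
  | [] => 0
  | a :: rest => reward s a + cumReward (step s a) rest

/-- Number of color changes (adjacent unequal pairs) in a sequence of colors. -/
def colorChanges : List ℕ → ℕ
  | a :: b :: t => (if a = b then 0 else 1) + colorChanges (b :: t)
  | _ => 0

def Action.isStore : Action L → Bool
  | Action.store _ => true
  | Action.retrieve _ => false

def Action.isRetrieve : Action L → Bool
  | Action.store _ => false
  | Action.retrieve _ => true

/-- The buffer is completely full. -/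
def BufferFull (s : PSState L W) : Prop := ∀ a, (s.buffer a).length = W

/-- The buffer is completely empty. -/
def BufferEmpty (s : PSState L W) : Prop := ∀ a, s.buffer a = []

/-- The state reached after performing the first `n` actions of a schedule. -/
def stateAt (s : PSState L W) (acts : List (Action L)) (n : ℕ) : PSState L W :=
  run s (acts.take n)

/-- A schedule follows the store-then-retrieve discipline: it alternates maximal phases,
storing until the buffer is full (or upstream is empty), then retrieving until the
buffer is empty. Equivalently, at every switch from a store action to a retrieve action
the buffer is full or upstream empty, and at every switch from retrieve to store the
buffer is empty. -/
def StoreThenRetrieve (s : PSState L W) (acts : List (Action L)) : Prop :=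
  ∀ i : ℕ, ∀ x y : Action L, acts[i]? = some x → acts[i+1]? = some y →
    (x.isStore = true → y.isRetrieve = true →
      BufferFull (stateAt s acts (i+1)) ∨ (stateAt s acts (i+1)).upstream = []) ∧
    (x.isRetrieve = true → y.isStore = true → BufferEmpty (stateAt s acts (i+1)))

end PS

namespace PS

variable {L W : ℕ}

lemma step_store_valid (s : PSState L W) (a : Fin L)
    (h : s.upstream ≠ [] ∧ (s.buffer a).length < W) :
    step s (Action.store a) =
      { s with upstream := s.upstream.tail,
               buffer := Function.update s.buffer a (s.buffer a ++ s.upstream.take 1) } := by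
  simp only [step, if_pos h]

lemma step_retrieve_cons (s : PSState L W) (a : Fin L) (c : ℕ) (r : List ℕ)
    (h : s.buffer a = c :: r) :
    step s (Action.retrieve a) =
      { s with buffer := Function.update s.buffer a r,
               downstream := s.downstream ++ [c] } := by
  simp only [step, h]

lemma step_retrieve_nil (s : PSState L W) (a : Fin L) (h : s.buffer a = []) :
    step s (Action.retrieve a) = s := by
  simp only [step, h]

lemma reward_store_valid (s : PSState L W) (a : Fin L)
    (h : s.upstream ≠ [] ∧ (s.buffer a).length < W) :
    reward s (Action.store a) = 0 := by
  simp only [reward, if_pos h]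

lemma reward_retrieve_cons (s : PSState L W) (a : Fin L) (c : ℕ) (r : List ℕ)
    (h : s.buffer a = c :: r) :
    reward s (Action.retrieve a) = if s.downstream.getLast? = some c then 1 else 0 := by
  simp only [reward, h]

lemma run_cons (s : PSState L W) (x : Action L) (acts : List (Action L)) :
    run s (x :: acts) = run (step s x) acts := rfl


/-- Two states agreeing on upstream and buffer (downstream may differ). -/
def Agree (t t' : PSState L W) : Prop :=
  t.upstream = t'.upstream ∧ t.buffer = t'.buffer

lemma agree_step {t t' : PSState L W} (h : Agree t t') (x : Action L) :
    Agree (step t x) (step t' x) ∧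
    ((step t x).downstream = t.downstream ∧ (step t' x).downstream = t'.downstream ∨
     ∃ c, (step t x).downstream = t.downstream ++ [c] ∧
          (step t' x).downstream = t'.downstream ++ [c]) := by
  obtain ⟨hu, hb⟩ := h
  cases x with
  | store a =>
    by_cases hv : t.upstream ≠ [] ∧ (t.buffer a).length < W
    · rw [step_store_valid t a hv, step_store_valid t' a (by rw [← hu, ← hb]; exact hv)]
      exact ⟨⟨by simp [hu], by rw [hu, hb]⟩, Or.inl ⟨rfl, rfl⟩⟩
    · have hv' : ¬ (t'.upstream ≠ [] ∧ (t'.buffer a).length < W) := by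
        rw [← hu, ← hb]; exact hv
      have e1 : step t (Action.store a) = t := by simp only [step, if_neg hv]
      have e2 : step t' (Action.store a) = t' := by simp only [step, if_neg hv']
      rw [e1, e2]
      exact ⟨⟨hu, hb⟩, Or.inl ⟨rfl, rfl⟩⟩
  | retrieve a =>
    cases hba : t.buffer a with
    | nil =>
      rw [step_retrieve_nil t a hba, step_retrieve_nil t' a (by rw [← hb]; exact hba)]
      exact ⟨⟨hu, hb⟩, Or.inl ⟨rfl, rfl⟩⟩
    | cons c r =>
      rw [step_retrieve_cons t a c r hba, step_retrieve_cons t' a c r (by rw [← hb]; exact hba)]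
      exact ⟨⟨hu, by rw [hb]⟩, Or.inr ⟨c, rfl, rfl⟩⟩

lemma reward_retrieve_nil (s : PSState L W) (a : Fin L) (h : s.buffer a = []) :
    reward s (Action.retrieve a) = -10 := by
  simp only [reward, h]

lemma agree_reward {t t' : PSState L W} (h : Agree t t')
    (hd : t.downstream.getLast? = t'.downstream.getLast?) (x : Action L) :
    reward t x = reward t' x := by
  obtain ⟨hu, hb⟩ := h
  cases x with
  | store a => simp only [reward, hu, hb]
  | retrieve a =>
    cases hba : t.buffer a with
    | nil => rw [reward_retrieve_nil t a hba, reward_retrieve_nil t' a (by rw [← hb]; exact hba)]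
    | cons c r =>
      rw [reward_retrieve_cons t a c r hba, reward_retrieve_cons t' a c r (by rw [← hb]; exact hba), hd]

/-- If two states agree on upstream and buffer and their downstream have the same last
color, the runs agree and cumulative rewards are equal. -/
lemma agree_cum {t t' : PSState L W} (acts : List (Action L)) (h : Agree t t')
    (hd : t.downstream.getLast? = t'.downstream.getLast?) :
    cumReward t acts = cumReward t' acts ∧ Agree (run t acts) (run t' acts) ∧
    (run t acts).downstream.getLast? = (run t' acts).downstream.getLast? := by
  induction acts generalizing t t' with
  | nil => exact ⟨rfl, h, hd⟩
  | cons x rest ih =>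
    obtain ⟨h1, h2⟩ := agree_step h x
    have hd' : (step t x).downstream.getLast? = (step t' x).downstream.getLast? := by
      rcases h2 with ⟨e1, e2⟩ | ⟨c, e1, e2⟩
      · rw [e1, e2, hd]
      · rw [e1, e2]; simp
    obtain ⟨c1, c2, c3⟩ := ih h1 hd'
    exact ⟨by simp only [cumReward, agree_reward h hd x, c1], c2, c3⟩

lemma agree_feasible {t t' : PSState L W} (acts : List (Action L)) (h : Agree t t')
    (hf : Feasible t acts) : Feasible t' acts := by
  induction acts generalizing t t' with
  | nil => trivial
  | cons x rest ih =>
    obtain ⟨hv, hf'⟩ := hf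
    obtain ⟨hu, hb⟩ := h
    refine ⟨?_, ih (agree_step ⟨hu, hb⟩ x).1 hf'⟩
    cases x with
    | store a => exact ⟨by rw [← hu]; exact hv.1, by rw [← hb]; exact hv.2⟩
    | retrieve a => show t'.buffer a ≠ []; rw [← hb]; exact hv

lemma agree_run {t t' : PSState L W} (acts : List (Action L)) (h : Agree t t') :
    Agree (run t acts) (run t' acts) := by
  induction acts generalizing t t' with
  | nil => exact h
  | cons x rest ih => exact ih (agree_step h x).1

lemma agree_complete {t t' : PSState L W} (acts : List (Action L)) (h : Agree t t')
    (hc : Complete t acts) : Complete t' acts := by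
  obtain ⟨hu, hb⟩ := agree_run acts h
  exact ⟨by rw [← hu]; exact hc.1, fun a => by rw [← hb]; exact hc.2 a⟩

/-- Even if last downstream colors differ, cumulative reward drops by at most 1. -/
lemma agree_cum_ge {t t' : PSState L W} (acts : List (Action L)) (h : Agree t t') :
    cumReward t acts - 1 ≤ cumReward t' acts := by
  induction acts generalizing t t' with
  | nil => simp [cumReward]
  | cons x rest ih =>
    obtain ⟨hu, hb⟩ := h
    cases x with
    | store a =>
      have : reward t (Action.store a) = reward t' (Action.store a) := by
        simp only [reward, hu, hb]
      simp only [cumReward, this]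
      have := ih (agree_step ⟨hu, hb⟩ (Action.store a)).1
      omega
    | retrieve a =>
      cases hba : t.buffer a with
      | nil =>
        have hba' : t'.buffer a = [] := by rw [← hb]; exact hba
        rw [show cumReward t (Action.retrieve a :: rest) =
              reward t (Action.retrieve a) + cumReward (step t (Action.retrieve a)) rest from rfl,
            show cumReward t' (Action.retrieve a :: rest) =
              reward t' (Action.retrieve a) + cumReward (step t' (Action.retrieve a)) rest from rfl,
            reward_retrieve_nil t a hba, reward_retrieve_nil t' a hba',
            step_retrieve_nil t a hba, step_retrieve_nil t' a hba']
        have := ih ⟨hu, hb⟩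
        omega
      | cons c r =>
        have hba' : t'.buffer a = c :: r := by rw [← hb]; exact hba
        rw [show cumReward t (Action.retrieve a :: rest) =
              reward t (Action.retrieve a) + cumReward (step t (Action.retrieve a)) rest from rfl,
            show cumReward t' (Action.retrieve a :: rest) =
              reward t' (Action.retrieve a) + cumReward (step t' (Action.retrieve a)) rest from rfl,
            reward_retrieve_cons t a c r hba, reward_retrieve_cons t' a c r hba',
            step_retrieve_cons t a c r hba, step_retrieve_cons t' a c r hba']
        have hag : Agree (step t (Action.retrieve a)) (step t' (Action.retrieve a)) :=
          (agree_step ⟨hu, hb⟩ (Action.retrieve a)).1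
        rw [step_retrieve_cons t a c r hba, step_retrieve_cons t' a c r hba'] at hag
        have heq := (agree_cum rest hag (by simp)).1
        rw [heq]
        split <;> split <;> omega


lemma getLast?_concat' (l : List ℕ) (c : ℕ) : (l ++ [c]).getLast? = some c := by
  simp

/-- Exchange lemma, phase 2: the buffer of lane `b` in `t` contains an extra car `p`
(somewhere in the middle); deleting its eventual retrieval loses at most reward 1. -/
lemma exchange_aux :
    ∀ (acts : List (Action L)) (t t' : PSState L W) (b : Fin L) (l₁ l₂ : List ℕ) (p : ℕ),
    t.upstream = t'.upstream →
    t.buffer b = l₁ ++ p :: l₂ →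
    t'.buffer b = l₁ ++ l₂ →
    (∀ c, c ≠ b → t.buffer c = t'.buffer c) →
    t.downstream.getLast? = t'.downstream.getLast? →
    Feasible t acts → Complete t acts →
    ∃ acts', Feasible t' acts' ∧ Complete t' acts' ∧
      cumReward t acts - 1 ≤ cumReward t' acts' := by
  intro acts
  induction acts with
  | nil =>
    intro t t' b l₁ l₂ p hu hb hb' hoth hd hf hc
    exfalso
    have := hc.2 b
    simp only [run, List.foldl_nil] at this
    rw [this] at hb
    simp at hb
  | cons x rest ih =>
    intro t t' b l₁ l₂ p hu hb hb' hoth hd hf hc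
    obtain ⟨hv, hf'⟩ := hf
    have hc' : Complete (step t x) rest := hc
    cases x with
    | store c =>
      have hv' : t.upstream ≠ [] ∧ (t.buffer c).length < W := hv
      have e1 := step_store_valid t c hv'
      by_cases hcb : c = b
      · subst hcb
        have hvc' : t'.upstream ≠ [] ∧ (t'.buffer c).length < W := by
          constructor
          · rw [← hu]; exact hv'.1
          · rw [hb']
            have := hv'.2
            rw [hb] at this
            simp only [List.length_append, List.length_cons] at this ⊢
            omega
        have e2 := step_store_valid t' c hvc'
        obtain ⟨acts', f', c', hle⟩ :=
          ih (step t (Action.store c)) (step t' (Action.store c)) c l₁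
            (l₂ ++ t.upstream.take 1) p
            (by rw [e1, e2]; simp [hu])
            (by rw [e1]; simp [hb])
            (by rw [e2]; simp [hb', hu])
            (by intro d hdc; rw [e1, e2];
                simp [Function.update_of_ne hdc, hoth d hdc])
            (by rw [e1, e2]; exact hd)
            hf' hc'
        refine ⟨Action.store c :: acts', ⟨hvc', f'⟩, ?_, ?_⟩
        · exact c'
        · have r1 := reward_store_valid t c hv'
          have r2 := reward_store_valid t' c hvc'
          show reward t (Action.store c) + cumReward (step t (Action.store c)) rest - 1 ≤
            reward t' (Action.store c) + cumReward (step t' (Action.store c)) acts'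
          rw [r1, r2]; omega
      · have hvc' : t'.upstream ≠ [] ∧ (t'.buffer c).length < W := by
          refine ⟨by rw [← hu]; exact hv'.1, by rw [← hoth c hcb]; exact hv'.2⟩
        have e2 := step_store_valid t' c hvc'
        obtain ⟨acts', f', c', hle⟩ :=
          ih (step t (Action.store c)) (step t' (Action.store c)) b l₁ l₂ p
            (by rw [e1, e2]; simp [hu])
            (by rw [e1]; simpa [Function.update_of_ne (Ne.symm hcb)] using hb)
            (by rw [e2]; simpa [Function.update_of_ne (Ne.symm hcb)] using hb')
            (by intro d hdb; rw [e1, e2]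
                by_cases hdc : d = c
                · subst hdc; simp [hoth d hcb, hu]
                · simp [Function.update_of_ne hdc, hoth d hdb])
            (by rw [e1, e2]; exact hd)
            hf' hc'
        refine ⟨Action.store c :: acts', ⟨hvc', f'⟩, c', ?_⟩
        have r1 := reward_store_valid t c hv'
        have r2 := reward_store_valid t' c hvc'
        show reward t (Action.store c) + cumReward (step t (Action.store c)) rest - 1 ≤
          reward t' (Action.store c) + cumReward (step t' (Action.store c)) acts'
        rw [r1, r2]; omega
    | retrieve c =>
      have hv' : t.buffer c ≠ [] := hv
      by_cases hcb : c = b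
      · subst hcb
        cases l₁ with
        | nil =>
          simp only [List.nil_append] at hb hb'
          have e1 := step_retrieve_cons t c p l₂ hb
          have hagree : Agree (step t (Action.retrieve c)) t' := by
            constructor
            · rw [e1]; exact hu
            · rw [e1]; funext d
              by_cases hdc : d = c
              · subst hdc; simp [hb']
              · simp [Function.update_of_ne hdc, hoth d hdc]
          refine ⟨rest, agree_feasible rest hagree hf', agree_complete rest hagree hc', ?_⟩
          have r1 := reward_retrieve_cons t c p l₂ hb
          show reward t (Action.retrieve c) + cumReward (step t (Action.retrieve c)) rest - 1 ≤
            cumReward t' rest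
          rw [r1]
          by_cases hlast : t.downstream.getLast? = some p
          · rw [if_pos hlast]
            have hd2 : (step t (Action.retrieve c)).downstream.getLast? =
                t'.downstream.getLast? := by
              rw [e1, ← hd, hlast]
              exact getLast?_concat' _ _
            have := (agree_cum rest hagree hd2).1
            omega
          · rw [if_neg hlast]
            have := agree_cum_ge rest hagree
            omega
        | cons h₁ l₁' =>
          have hbc : t.buffer c = h₁ :: (l₁' ++ p :: l₂) := hb
          have hbc' : t'.buffer c = h₁ :: (l₁' ++ l₂) := hb'
          have e1 := step_retrieve_cons t c h₁ _ hbc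
          have e2 := step_retrieve_cons t' c h₁ _ hbc'
          obtain ⟨acts', f', c', hle⟩ :=
            ih (step t (Action.retrieve c)) (step t' (Action.retrieve c)) c l₁' l₂ p
              (by rw [e1, e2]; exact hu)
              (by rw [e1]; simp)
              (by rw [e2]; simp)
              (by intro d hdc; rw [e1, e2];
                  simp [Function.update_of_ne hdc, hoth d hdc])
              (by rw [e1, e2]; simp)
              hf' hc'
          refine ⟨Action.retrieve c :: acts',
            ⟨by show t'.buffer c ≠ []; rw [hbc']; simp, f'⟩, c', ?_⟩
          have r1 := reward_retrieve_cons t c h₁ _ hbc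
          have r2 := reward_retrieve_cons t' c h₁ _ hbc'
          show reward t (Action.retrieve c) + cumReward (step t (Action.retrieve c)) rest - 1 ≤
            reward t' (Action.retrieve c) + cumReward (step t' (Action.retrieve c)) acts'
          rw [r1, r2, hd]; omega
      · obtain ⟨d, r, hbc⟩ : ∃ d r, t.buffer c = d :: r := by
          cases hh : t.buffer c with
          | nil => exact absurd hh hv'
          | cons d r => exact ⟨d, r, rfl⟩
        have hbc' : t'.buffer c = d :: r := by rw [← hoth c hcb]; exact hbc
        have e1 := step_retrieve_cons t c d r hbc
        have e2 := step_retrieve_cons t' c d r hbc'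
        obtain ⟨acts', f', c', hle⟩ :=
          ih (step t (Action.retrieve c)) (step t' (Action.retrieve c)) b l₁ l₂ p
            (by rw [e1, e2]; exact hu)
            (by rw [e1]; simpa [Function.update_of_ne (Ne.symm hcb)] using hb)
            (by rw [e2]; simpa [Function.update_of_ne (Ne.symm hcb)] using hb')
            (by intro e heb; rw [e1, e2]
                by_cases hec : e = c
                · subst hec; simp
                · simp [Function.update_of_ne hec, hoth e heb])
            (by rw [e1, e2]; simp)
            hf' hc'
        refine ⟨Action.retrieve c :: acts',
          ⟨by show t'.buffer c ≠ []; rw [hbc']; simp, f'⟩, c', ?_⟩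
        have r1 := reward_retrieve_cons t c d r hbc
        have r2 := reward_retrieve_cons t' c d r hbc'
        show reward t (Action.retrieve c) + cumReward (step t (Action.retrieve c)) rest - 1 ≤
          reward t' (Action.retrieve c) + cumReward (step t' (Action.retrieve c)) acts'
        rw [r1, r2, hd]; omega


/-- Exchange lemma, phase 1: `t` has an extra car `p` at the front of the upstream. -/
lemma exchange_head :
    ∀ (acts : List (Action L)) (t t' : PSState L W) (p : ℕ),
    t.upstream = p :: t'.upstream →
    t.buffer = t'.buffer →
    t.downstream.getLast? = t'.downstream.getLast? →
    Feasible t acts → Complete t acts →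
    ∃ acts', Feasible t' acts' ∧ Complete t' acts' ∧
      cumReward t acts - 1 ≤ cumReward t' acts' := by
  intro acts
  induction acts with
  | nil =>
    intro t t' p hu hb hd hf hc
    exfalso
    have := hc.1
    simp only [run, List.foldl_nil] at this
    rw [this] at hu
    exact List.cons_ne_nil p t'.upstream hu.symm
  | cons x rest ih =>
    intro t t' p hu hb hd hf hc
    obtain ⟨hv, hf'⟩ := hf
    have hc' : Complete (step t x) rest := hc
    cases x with
    | store c =>
      have hv' : t.upstream ≠ [] ∧ (t.buffer c).length < W := hv
      have e1 := step_store_valid t c hv'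
      have htake : t.upstream.take 1 = [p] := by rw [hu]; rfl
      obtain ⟨acts', f', c', hle⟩ :=
        exchange_aux rest (step t (Action.store c)) t' c (t'.buffer c) [] p
          (by rw [e1]; show t.upstream.tail = t'.upstream; rw [hu]; rfl)
          (by rw [e1]; simp [htake, hb])
          (by simp)
          (by intro d hdc; rw [e1]; simp [Function.update_of_ne hdc, hb])
          (by rw [e1]; exact hd)
          hf' hc'
      refine ⟨acts', f', c', ?_⟩
      have r1 := reward_store_valid t c hv'
      show reward t (Action.store c) + cumReward (step t (Action.store c)) rest - 1 ≤
        cumReward t' acts'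
      rw [r1]; omega
    | retrieve c =>
      have hv' : t.buffer c ≠ [] := hv
      obtain ⟨d, r, hbc⟩ : ∃ d r, t.buffer c = d :: r := by
        cases hh : t.buffer c with
        | nil => exact absurd hh hv'
        | cons d r => exact ⟨d, r, rfl⟩
      have hbc' : t'.buffer c = d :: r := by rw [← hb]; exact hbc
      have e1 := step_retrieve_cons t c d r hbc
      have e2 := step_retrieve_cons t' c d r hbc'
      obtain ⟨acts', f', c', hle⟩ :=
        ih (step t (Action.retrieve c)) (step t' (Action.retrieve c)) p
          (by rw [e1, e2]; exact hu)
          (by rw [e1, e2, hb])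
          (by rw [e1, e2]; simp)
          hf' hc'
      refine ⟨Action.retrieve c :: acts',
        ⟨by show t'.buffer c ≠ []; rw [hbc']; simp, f'⟩, c', ?_⟩
      have r1 := reward_retrieve_cons t c d r hbc
      have r2 := reward_retrieve_cons t' c d r hbc'
      show reward t (Action.retrieve c) + cumReward (step t (Action.retrieve c)) rest - 1 ≤
        reward t' (Action.retrieve c) + cumReward (step t' (Action.retrieve c)) acts'
      rw [r1, r2, hd]; omega


lemma run_append (t : PSState L W) (l₁ l₂ : List (Action L)) :
    run t (l₁ ++ l₂) = run (run t l₁) l₂ := List.foldl_append ..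

lemma feasible_append {t : PSState L W} {l₁ l₂ : List (Action L)}
    (h₁ : Feasible t l₁) (h₂ : Feasible (run t l₁) l₂) : Feasible t (l₁ ++ l₂) := by
  induction l₁ generalizing t with
  | nil => exact h₂
  | cons x rest ih => exact ⟨h₁.1, ih h₁.2 h₂⟩

lemma flush_spec : ∀ (n : ℕ) (t : PSState L W) (a : Fin L), (t.buffer a).length = n →
    Feasible t (List.replicate n (Action.retrieve a)) ∧
    ∃ d, run t (List.replicate n (Action.retrieve a)) =
      ⟨t.upstream, Function.update t.buffer a [], d⟩ := by
  intro n
  induction n with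
  | zero =>
    intro t a h
    have h0 : t.buffer a = [] := List.eq_nil_of_length_eq_zero h
    refine ⟨trivial, t.downstream, ?_⟩
    simp only [List.replicate, run, List.foldl_nil]
    obtain ⟨u, bf, ds⟩ := t
    simp only at h0 ⊢
    congr 1
    rw [← h0, Function.update_eq_self]
  | succ n ih =>
    intro t a h
    obtain ⟨c, r, hbc⟩ : ∃ c r, t.buffer a = c :: r := by
      cases hh : t.buffer a with
      | nil => rw [hh] at h; simp at h
      | cons c r => exact ⟨c, r, rfl⟩
    have e1 := step_retrieve_cons t a c r hbc
    have hr : ((step t (Action.retrieve a)).buffer a).length = n := by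
      rw [e1]; simp; rw [hbc] at h; simpa using h
    obtain ⟨f', d, e⟩ := ih (step t (Action.retrieve a)) a hr
    refine ⟨⟨by show t.buffer a ≠ []; rw [hbc]; simp, f'⟩, d, ?_⟩
    show run (step t (Action.retrieve a)) (List.replicate n (Action.retrieve a)) = _
    rw [e, e1]
    congr 1
    simp [Function.update_idem]

lemma flush_all : ∀ (lanes : List (Fin L)) (t : PSState L W),
    (∀ a, a ∉ lanes → t.buffer a = []) →
    ∃ acts, Feasible t acts ∧ ∃ d, run t acts = ⟨t.upstream, fun _ => [], d⟩ := by
  intro lanes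
  induction lanes with
  | nil =>
    intro t h
    refine ⟨[], trivial, t.downstream, ?_⟩
    show t = _
    obtain ⟨u, bf, ds⟩ := t
    simp only at h ⊢
    congr 1
    funext a
    exact h a (by simp)
  | cons c rest ih =>
    intro t h
    obtain ⟨f₁, d₁, e₁⟩ := flush_spec (t.buffer c).length t c rfl
    set acts₁ := List.replicate (t.buffer c).length (Action.retrieve c)
    obtain ⟨acts₂, f₂, d₂, e₂⟩ := ih (run t acts₁) (by
      intro a ha
      rw [e₁]
      by_cases hac : a = c
      · subst hac; simp
      · simp only [Function.update_of_ne hac]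
        exact h a (by simp [hac, ha]))
    refine ⟨acts₁ ++ acts₂, feasible_append f₁ f₂, d₂, ?_⟩
    rw [run_append, e₂, e₁]

lemma cycle_spec (a : Fin L) (hW : 0 < W) : ∀ (u : List ℕ) (t : PSState L W),
    t.upstream = u → (∀ c, t.buffer c = []) →
    ∃ acts, Feasible t acts ∧ Complete t acts := by
  intro u
  induction u with
  | nil =>
    intro t hu hb
    exact ⟨[], trivial, hu, hb⟩
  | cons q u' ih =>
    intro t hu hb
    have hv : t.upstream ≠ [] ∧ (t.buffer a).length < W := by
      rw [hu, hb a]; exact ⟨by simp, by simpa using hW⟩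
    have e1 := step_store_valid t a hv
    have hba1 : (step t (Action.store a)).buffer a = [q] := by
      rw [e1]; simp [hb a, hu]
    have e2 := step_retrieve_cons (step t (Action.store a)) a q [] hba1
    obtain ⟨acts, f, c⟩ := ih (step (step t (Action.store a)) (Action.retrieve a))
      (by rw [e2, e1]; show t.upstream.tail = u'; rw [hu]; rfl)
      (by intro d; rw [e2]
          by_cases hda : d = a
          · subst hda; simp
          · rw [e1]; simp only [Function.update_of_ne hda]; exact hb d)
    refine ⟨Action.store a :: Action.retrieve a :: acts, ⟨hv, ?_, f⟩, c⟩
    show (step t (Action.store a)).buffer a ≠ []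
    rw [hba1]; simp

lemma exists_complete (t : PSState L W) (a : Fin L) (hW : 0 < W) :
    ∃ acts, Feasible t acts ∧ Complete t acts := by
  obtain ⟨acts₁, f₁, d₁, e₁⟩ := flush_all (List.finRange L) t
    (fun a h => absurd (List.mem_finRange a) h)
  obtain ⟨acts₂, f₂, c₂⟩ := cycle_spec a hW t.upstream (run t acts₁)
    (by rw [e₁]) (by rw [e₁]; intro c; rfl)
  refine ⟨acts₁ ++ acts₂, feasible_append f₁ f₂, ?_, ?_⟩
  · rw [run_append]; exact c₂.1
  · intro b; rw [run_append]; exact c₂.2 b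

/-- total number of cars in the system. -/
def mass (t : PSState L W) : ℕ :=
  t.upstream.length + (∑ a : Fin L, (t.buffer a).length) + t.downstream.length

lemma sum_update (f : Fin L → List ℕ) (a : Fin L) (v : List ℕ) :
    (∑ c : Fin L, (Function.update f a v c).length) + (f a).length
      = (∑ c : Fin L, (f c).length) + v.length := by
  have h1 : ∀ c, (Function.update f a v c).length
      = Function.update (fun c => (f c).length) a v.length c := fun c =>
    Function.apply_update (fun _ l => l.length) f a v c
  simp only [h1]
  rw [Finset.sum_update_of_mem (Finset.mem_univ a), Finset.sdiff_singleton_eq_erase,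
      ← Finset.add_sum_erase Finset.univ (fun c => (f c).length) (Finset.mem_univ a)]
  omega

lemma mass_step (t : PSState L W) (x : Action L) : mass (step t x) = mass t := by
  cases x with
  | store c =>
    by_cases hv : t.upstream ≠ [] ∧ (t.buffer c).length < W
    · rw [step_store_valid t c hv]
      obtain ⟨q, u, hu⟩ : ∃ q u, t.upstream = q :: u := by
        cases hh : t.upstream with
        | nil => exact absurd hh hv.1
        | cons q u => exact ⟨q, u, rfl⟩
      unfold mass
      have hs := sum_update t.buffer c (t.buffer c ++ t.upstream.take 1)
      simp only [hu, List.tail_cons, List.take_succ_cons, List.take_zero, List.length_append,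
        List.length_cons, List.length_nil] at hs ⊢
      omega
    · simp only [step, if_neg hv]
  | retrieve c =>
    cases hbc : t.buffer c with
    | nil => rw [step_retrieve_nil t c hbc]
    | cons d r =>
      rw [step_retrieve_cons t c d r hbc]
      unfold mass
      have hs := sum_update t.buffer c r
      simp only [hbc, List.length_cons] at hs ⊢
      simp only [List.length_append, List.length]
      omega

lemma mass_run (t : PSState L W) (acts : List (Action L)) : mass (run t acts) = mass t := by
  induction acts generalizing t with
  | nil => rfl
  | cons x rest ih => rw [run_cons, ih, mass_step]

lemma cum_le (acts : List (Action L)) : ∀ t : PSState L W,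
    cumReward t acts ≤ ((run t acts).downstream.length : ℤ) - t.downstream.length := by
  induction acts with
  | nil => intro t; simp [cumReward, run]
  | cons x rest ih =>
    intro t
    have hstep : reward t x ≤ ((step t x).downstream.length : ℤ) - t.downstream.length := by
      cases x with
      | store c =>
        by_cases hv : t.upstream ≠ [] ∧ (t.buffer c).length < W
        · rw [step_store_valid t c hv, reward_store_valid t c hv]; simp
        · simp only [step, if_neg hv, reward, if_neg hv]; omega
      | retrieve c =>
        cases hbc : t.buffer c with
        | nil => rw [step_retrieve_nil t c hbc, reward_retrieve_nil t c hbc]; omega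
        | cons d r =>
          rw [step_retrieve_cons t c d r hbc, reward_retrieve_cons t c d r hbc]
          simp only [List.length_append, List.length]
          split <;> push_cast <;> omega
    have := ih (step t x)
    show reward t x + cumReward (step t x) rest ≤ _
    rw [show run t (x :: rest) = run (step t x) rest from rfl]
    omega

lemma cum_bounded (t : PSState L W) (acts : List (Action L)) :
    cumReward t acts ≤ (mass t : ℤ) := by
  have h1 := cum_le acts t
  have h2 := mass_run t acts
  have h3 : (run t acts).downstream.length ≤ mass (run t acts) := by unfold mass; omega
  have : ((run t acts).downstream.length : ℤ) ≤ (mass t : ℤ) := by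
    rw [← h2]; exact_mod_cast h3
  omega


/-- Fast-track actions are optimal: if the current downstream color `p` equals the
color of the next upstream car and lane `a` is empty, then some maximizer of the
cumulative reward over all feasible completing action sequences begins with storing
that car into lane `a` immediately followed by retrieving it, and this pair of
actions yields reward `1`. -/
theorem fast_track_optimal {L W : ℕ} (hW : 0 < W) (s : PSState L W) (a : Fin L) (p : ℕ)
    (hp : s.downstream.getLast? = some p) (hup : s.upstream.head? = some p)
    (hempty : s.buffer a = []) :
    ∃ acts : List (Action L), Feasible s acts ∧ Complete s acts ∧
      acts.take 2 = [Action.store a, Action.retrieve a] ∧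
      reward s (Action.store a) + reward (step s (Action.store a)) (Action.retrieve a) = 1 ∧
      ∀ acts' : List (Action L), Feasible s acts' → Complete s acts' →
        cumReward s acts' ≤ cumReward s acts := by
  obtain ⟨u, hu⟩ : ∃ u, s.upstream = p :: u := by
    cases hh : s.upstream with
    | nil => rw [hh] at hup; simp at hup
    | cons q u => rw [hh] at hup; simp at hup; exact ⟨u, by rw [hup]⟩
  have hv : s.upstream ≠ [] ∧ (s.buffer a).length < W := by
    rw [hu, hempty]; exact ⟨by simp, by simpa using hW⟩
  have e1 := step_store_valid s a hv
  have hba1 : (step s (Action.store a)).buffer a = [p] := by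
    rw [e1]; simp [hempty, hu]
  have e2 := step_retrieve_cons (step s (Action.store a)) a p [] hba1
  have r1 := reward_store_valid s a hv
  have r2 : reward (step s (Action.store a)) (Action.retrieve a) = 1 := by
    rw [reward_retrieve_cons (step s (Action.store a)) a p [] hba1, e1]
    simp [hp]
  -- properties of the state after the fast-track pair
  set s₂ := step (step s (Action.store a)) (Action.retrieve a) with hs₂
  have hs₂u : s₂.upstream = u := by rw [e2, e1]; show s.upstream.tail = u; rw [hu]; rfl
  have hs₂b : s₂.buffer = s.buffer := by
    rw [e2]; funext d
    by_cases hda : d = a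
    · subst hda; simp [hempty]
    · rw [e1]; simp only [Function.update_of_ne hda]
  have hs₂d : s₂.downstream.getLast? = some p := by
    rw [e2, e1]; exact getLast?_concat' _ _
  -- maximizer over all feasible complete schedules
  obtain ⟨M, ⟨acts₀, f₀, c₀, hM⟩, hmax⟩ :=
    Int.exists_greatest_of_bdd (P := fun z =>
        ∃ acts, Feasible s acts ∧ Complete s acts ∧ cumReward s acts = z)
      ⟨(mass s : ℤ), fun z ⟨acts, _, _, hz⟩ => hz ▸ cum_bounded s acts⟩
      (by obtain ⟨acts, f, c⟩ := exists_complete s a hW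
          exact ⟨cumReward s acts, acts, f, c, rfl⟩)
  -- exchange: from the maximizer acts₀ get a schedule from s₂ with reward ≥ M - 1
  obtain ⟨acts', f', c', hle⟩ := exchange_head acts₀ s s₂ p
    (by rw [hs₂u, hu]) (by rw [hs₂b]) (by rw [hs₂d, hp]) f₀ c₀
  refine ⟨Action.store a :: Action.retrieve a :: acts',
    ⟨hv, by show (step s (Action.store a)).buffer a ≠ []; rw [hba1]; simp, f'⟩,
    c', rfl, by rw [r1, r2]; ring, ?_⟩
  intro acts'' f'' c''
  have h1 : cumReward s acts'' ≤ M := hmax _ ⟨acts'', f'', c'', rfl⟩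
  have h2 : cumReward s (Action.store a :: Action.retrieve a :: acts')
      = 1 + cumReward s₂ acts' := by
    show reward s (Action.store a) +
      (reward (step s (Action.store a)) (Action.retrieve a) + cumReward s₂ acts') = _
    rw [r1, r2]; ring
  rw [h2]; omega

end PS
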